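/- Let V(k) = Θ̃(k)^T Θ̃(k) with Θ̃(k+1) = (I - ηU(k) - ηS)Θ̃(k), where U(k), S are symmetric positive semidefinite, S is positive definite, and η = λ_min(S)/(λ_max(U(k)) + λ_max(S))². Then V(k+1) - V(k) ≤ -[λ_min(S)²/(λ_max(U(k)) + λ_max(S))²] ‖Θ̃(k)‖². -/

import Mathlib

open Matrix

/-- Largest eigenvalue of a hermitian real matrix. -/
noncomputable def eigMax {n : ℕ} (A : Matrix (Fin n) (Fin n) ℝ)
    (hA : A.IsHermitian) : ℝ := ⨆ i, hA.eigenvalues i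

/-- Smallest eigenvalue of a hermitian real matrix. -/
noncomputable def eigMin {n : ℕ} (A : Matrix (Fin n) (Fin n) ℝ)
    (hA : A.IsHermitian) : ℝ := ⨅ i, hA.eigenvalues i


open RealInnerProductSpace in
lemma toEuclideanLin_eigen {n : ℕ} (A : Matrix (Fin n) (Fin n) ℝ) (hA : A.IsHermitian) (i : Fin n) :
    Matrix.toEuclideanLin A (hA.eigenvectorBasis i) = hA.eigenvalues i • hA.eigenvectorBasis i := by
  apply (WithLp.equiv 2 (Fin n → ℝ)).injective
  simpa [Matrix.toEuclideanLin_apply] using hA.mulVec_eigenvectorBasis i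

open RealInnerProductSpace in
lemma inner_toEuclideanLin_eq {n : ℕ} (A : Matrix (Fin n) (Fin n) ℝ) (hA : A.IsHermitian)
    (x : EuclideanSpace ℝ (Fin n)) :
    ⟪x, Matrix.toEuclideanLin A x⟫ = ∑ i, hA.eigenvalues i * ⟪x, hA.eigenvectorBasis i⟫ ^ 2 := by
  rw [← (hA.eigenvectorBasis).sum_inner_mul_inner x (Matrix.toEuclideanLin A x)]
  refine Finset.sum_congr rfl fun i _ => ?_
  rw [← (Matrix.isHermitian_iff_isSymmetric.1 hA) (hA.eigenvectorBasis i) x,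
    toEuclideanLin_eigen, inner_smul_left]
  simp only [RCLike.star_def, conj_trivial]
  rw [real_inner_comm x]
  ring

open RealInnerProductSpace in
lemma norm_sq_eq_sum_inner {n : ℕ} (A : Matrix (Fin n) (Fin n) ℝ) (hA : A.IsHermitian)
    (x : EuclideanSpace ℝ (Fin n)) :
    ‖x‖ ^ 2 = ∑ i, ⟪x, hA.eigenvectorBasis i⟫ ^ 2 := by
  rw [← real_inner_self_eq_norm_sq, ← (hA.eigenvectorBasis).sum_inner_mul_inner x x]
  refine Finset.sum_congr rfl fun i _ => ?_
  rw [real_inner_comm x]; ring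

open RealInnerProductSpace in
lemma rayleigh_le {n : ℕ} (A : Matrix (Fin n) (Fin n) ℝ) (hA : A.IsHermitian)
    (x : EuclideanSpace ℝ (Fin n)) :
    ⟪x, Matrix.toEuclideanLin A x⟫ ≤ eigMax A hA * ‖x‖ ^ 2 := by
  rw [inner_toEuclideanLin_eq A hA, norm_sq_eq_sum_inner A hA, Finset.mul_sum]
  refine Finset.sum_le_sum fun i _ => ?_
  have h1 : hA.eigenvalues i ≤ eigMax A hA :=
    le_ciSup (Set.Finite.bddAbove (Set.finite_range _)) i
  nlinarith [sq_nonneg (⟪x, hA.eigenvectorBasis i⟫ : ℝ)]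

open RealInnerProductSpace in
lemma rayleigh_ge {n : ℕ} (A : Matrix (Fin n) (Fin n) ℝ) (hA : A.IsHermitian)
    (x : EuclideanSpace ℝ (Fin n)) :
    eigMin A hA * ‖x‖ ^ 2 ≤ ⟪x, Matrix.toEuclideanLin A x⟫ := by
  rw [inner_toEuclideanLin_eq A hA, norm_sq_eq_sum_inner A hA, Finset.mul_sum]
  refine Finset.sum_le_sum fun i _ => ?_
  have h1 : eigMin A hA ≤ hA.eigenvalues i :=
    ciInf_le (Set.Finite.bddBelow (Set.finite_range _)) i
  nlinarith [sq_nonneg (⟪x, hA.eigenvectorBasis i⟫ : ℝ)]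

open RealInnerProductSpace

/-- Lyapunov decrease of the concurrent-learning error. For
`V(k) = Θ̃(k)ᵀΘ̃(k)` and `Θ̃(k+1) = (I − ηU(k) − ηS) Θ̃(k)` with `U(k)`, `S`
symmetric PSD, `S` positive definite, and
`η = λ_min(S) / (λ_max(U(k)) + λ_max(S))²`, one has
`V(k+1) − V(k) ≤ −(λ_min(S)² / (λ_max(U(k)) + λ_max(S))²) ‖Θ̃(k)‖²`. -/
theorem stmt2 {n : ℕ}
    (U : ℕ → Matrix (Fin n) (Fin n) ℝ) (hU : ∀ k, (U k).PosSemidef)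
    (S : Matrix (Fin n) (Fin n) ℝ) (hS : S.PosDef)
    (η : ℕ → ℝ)
    (hη : ∀ k, η k = eigMin S hS.1 / (eigMax (U k) (hU k).1 + eigMax S hS.1) ^ 2)
    (Θ : ℕ → EuclideanSpace ℝ (Fin n))
    (hrec : ∀ k, Θ (k + 1) = Matrix.toEuclideanLin (1 - η k • U k - η k • S) (Θ k))
    (V : ℕ → ℝ) (hV : ∀ k, V k = ‖Θ k‖ ^ 2) :
    ∀ k, V (k + 1) - V k ≤
      -(eigMin S hS.1 ^ 2 / (eigMax (U k) (hU k).1 + eigMax S hS.1) ^ 2) * ‖Θ k‖ ^ 2 := by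
  intro k
  rcases Nat.eq_zero_or_pos n with hn | hn
  · subst hn
    have h0 : ∀ j, Θ j = 0 := fun j => Subsingleton.elim _ _
    simp [hV, h0]
  haveI : Nonempty (Fin n) := ⟨⟨0, hn⟩⟩
  set m := eigMin S hS.1 with hm_def
  set mx := eigMax S hS.1 with hmx_def
  set u := eigMax (U k) (hU k).1 with hu_def
  set x := Θ k with hx_def
  set e := η k with he_def
  have hm : 0 < m := by
    obtain ⟨i, hi⟩ := exists_eq_ciInf_of_finite (f := hS.1.eigenvalues)
    rw [hm_def, eigMin, ← hi]
    exact hS.eigenvalues_pos i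
  have hu0 : 0 ≤ u := le_trans ((hU k).eigenvalues_nonneg (Classical.arbitrary _))
    (le_ciSup (Set.Finite.bddAbove (Set.finite_range _)) _)
  have hmmx : m ≤ mx :=
    le_trans (ciInf_le (Set.Finite.bddBelow (Set.finite_range _)) (Classical.arbitrary _))
      (le_ciSup (Set.Finite.bddAbove (Set.finite_range _)) _)
  set L := u + mx with hL_def
  have hL : 0 < L := by linarith
  have he : e = m / L ^ 2 := hη k
  have he0 : 0 ≤ e := by rw [he]; exact div_nonneg hm.le (sq_nonneg L)
  have heL2 : e * L ^ 2 = m := by rw [he]; field_simp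
  have heL : e * L ≤ 1 := by
    rw [he, div_mul_eq_mul_div, div_le_one (pow_pos hL 2)]
    nlinarith
  -- the linear map `T = U k + S` and the quadratic form `t = ⟪x, T x⟫`
  set T : EuclideanSpace ℝ (Fin n) →ₗ[ℝ] EuclideanSpace ℝ (Fin n) :=
    Matrix.toEuclideanLin (U k + S) with hT_def
  set t := (⟪x, T x⟫ : ℝ) with ht_def
  have hTadd : ∀ y : EuclideanSpace ℝ (Fin n),
      T y = Matrix.toEuclideanLin (U k) y + Matrix.toEuclideanLin S y := by
    intro y; rw [hT_def, map_add]; rfl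
  have ht_lb : m * ‖x‖ ^ 2 ≤ t := by
    have h1 := rayleigh_ge S hS.1 x
    have h2 := rayleigh_ge (U k) (hU k).1 x
    have h3 : 0 ≤ eigMin (U k) (hU k).1 :=
      le_ciInf fun i => (hU k).eigenvalues_nonneg i
    have h4 : 0 ≤ (⟪x, Matrix.toEuclideanLin (U k) x⟫ : ℝ) := by nlinarith [sq_nonneg ‖x‖]
    rw [ht_def, hTadd, inner_add_right]
    linarith
  have ht0 : 0 ≤ t := le_trans (by positivity) ht_lb
  -- square root trick: `‖T x‖² ≤ L * t`
  have psd : (U k + S).PosSemidef := (hU k).add hS.posSemidef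
  obtain ⟨B, hBherm, hBmul⟩ : ∃ B : Matrix (Fin n) (Fin n) ℝ, B.IsHermitian ∧ B * B = U k + S := by
    open scoped MatrixOrder in
    exact ⟨CFC.sqrt (U k + S), (CFC.sqrt_nonneg _).posSemidef.1,
      CFC.sqrt_mul_sqrt_self _ psd.nonneg⟩
  have hBsym := Matrix.isHermitian_iff_isSymmetric.1 hBherm
  set y : EuclideanSpace ℝ (Fin n) := Matrix.toEuclideanLin B x with hy_def
  have hBB : ∀ z : EuclideanSpace ℝ (Fin n),
      Matrix.toEuclideanLin B (Matrix.toEuclideanLin B z) = T z := by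
    intro z
    have hmul : Matrix.toEuclideanLin (B * B) z
        = Matrix.toEuclideanLin B (Matrix.toEuclideanLin B z) := by
      simp only [Matrix.toEuclideanLin_apply, Matrix.mulVec_mulVec,
        Equiv.apply_symm_apply]
    rw [hT_def, ← hBmul, hmul]
  have hy2 : ‖y‖ ^ 2 = t := by
    rw [← real_inner_self_eq_norm_sq, hy_def, hBsym, hBB]
  have hTx : ‖T x‖ ^ 2 ≤ L * t := by
    have h1 : ‖T x‖ ^ 2 = (⟪y, T y⟫ : ℝ) := by
      rw [← real_inner_self_eq_norm_sq, ← hBB x, ← hy_def, hBsym, hBB]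
    have h2 := rayleigh_le (U k) (hU k).1 y
    have h3 := rayleigh_le S hS.1 y
    rw [h1, hTadd, inner_add_right]
    calc (⟪y, Matrix.toEuclideanLin (U k) y⟫ : ℝ) + ⟪y, Matrix.toEuclideanLin S y⟫
        ≤ u * ‖y‖ ^ 2 + mx * ‖y‖ ^ 2 := by exact add_le_add h2 h3
      _ = L * t := by rw [hy2, hL_def]; ring
  -- the recursion step
  have hstep : Θ (k + 1) = x - e • T x := by
    have hmat : (1 : Matrix (Fin n) (Fin n) ℝ) - e • U k - e • S = 1 - e • (U k + S) := by
      rw [smul_add, sub_sub]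
    rw [hrec k, ← he_def, ← hx_def, hmat, map_sub, _root_.map_smul, LinearMap.sub_apply,
      LinearMap.smul_apply, ← hT_def]
    congr 1
    simp [Matrix.toEuclideanLin_apply, Matrix.one_mulVec]
  -- the key estimate
  have key : ‖x - e • T x‖ ^ 2 ≤ ‖x‖ ^ 2 - e * m * ‖x‖ ^ 2 := by
    rw [norm_sub_sq_real, real_inner_smul_right, norm_smul, mul_pow, Real.norm_eq_abs, sq_abs]
    have h_a : e ^ 2 * ‖T x‖ ^ 2 ≤ e ^ 2 * (L * t) :=
      mul_le_mul_of_nonneg_left hTx (sq_nonneg e)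
    have h_b : e * (m * ‖x‖ ^ 2) ≤ e * t := mul_le_mul_of_nonneg_left ht_lb he0
    have h_c : 0 ≤ e * t * (1 - e * L) :=
      mul_nonneg (mul_nonneg he0 ht0) (by linarith)
    rw [← ht_def]
    nlinarith
  -- conclude
  have hfin : ‖x - e • T x‖ ^ 2 - ‖x‖ ^ 2 ≤ -(m ^ 2 / L ^ 2) * ‖x‖ ^ 2 := by
    have hem : -(m ^ 2 / L ^ 2) * ‖x‖ ^ 2 = -(e * m) * ‖x‖ ^ 2 := by rw [he]; ring
    rw [hem]
    linarith [key]
  rw [hV, hV, hstep, ← hx_def]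
  exact hfin
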